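/- arXiv:2502.10199 — 4 statements merged into one kernel-verified Lean document; each statement's English description precedes it below -/
import Mathlib

section
/- The one-step Hug map Ψ_δ : ℝⁿ×ℝⁿ → ℝⁿ×ℝⁿ, defined by Ψ_δ(x,v) = (x′,v′) with v′ = R(x+(δ/2)v)v and x′ = x+(δ/2)v+(δ/2)v′, preserves Lebesgue measure (volume) on ℝⁿ×ℝⁿ. -/
open Matrix MeasureTheory

noncomputable section

abbrev Evec (n : ℕ) : Type := EuclideanSpace ℝ (Fin n)

/-- Apply a matrix to a vector of Euclidean space. -/
def mvE {m n : ℕ} (A : Matrix (Fin m) (Fin n) ℝ) (v : Evec n) : Evec m :=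
  Matrix.toEuclideanLin A v

/-- Moore–Penrose pseudoinverse `Aᵀ(AAᵀ)⁻¹` of a full-rank wide matrix. -/
def pinv {m n : ℕ} (A : Matrix (Fin m) (Fin n) ℝ) : Matrix (Fin n) (Fin m) ℝ :=
  Aᵀ * (A * Aᵀ)⁻¹

/-- Orthogonal projection onto the normal space: `N = A⁺A`. -/
def Nproj {m n : ℕ} (A : Matrix (Fin m) (Fin n) ℝ) : Matrix (Fin n) (Fin n) ℝ :=
  pinv A * A

/-- Orthogonal projection onto the tangent space: `T = I - N`. -/
def Tproj {m n : ℕ} (A : Matrix (Fin m) (Fin n) ℝ) : Matrix (Fin n) (Fin n) ℝ :=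
  1 - Nproj A

/-- Reflection: `R = I - 2N`. -/
def Rrefl {m n : ℕ} (A : Matrix (Fin m) (Fin n) ℝ) : Matrix (Fin n) (Fin n) ℝ :=
  1 - (2 : ℝ) • Nproj A

/-- One step of the Hug integrator. -/
def hugStep {m n : ℕ} (J : Evec n → Matrix (Fin m) (Fin n) ℝ) (δ : ℝ)
    (p : Evec n × Evec n) : Evec n × Evec n :=
  let xh := p.1 + (δ / 2) • p.2
  let v' := mvE (Rrefl (J xh)) p.2
  (xh + (δ / 2) • v', v')

lemma gram_isUnit {m n : ℕ} {A : Matrix (Fin m) (Fin n) ℝ} (h : A.rank = m) :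
    IsUnit (A * Aᵀ) := by
  have h1 : (A * Aᵀ).rank = m := by rw [Matrix.rank_self_mul_transpose, h]
  rw [← Matrix.mulVec_surjective_iff_isUnit]
  have hr : LinearMap.range (A * Aᵀ).mulVecLin = ⊤ := by
    apply Submodule.eq_top_of_finrank_eq
    show (A * Aᵀ).rank = _
    simp [h1]
  intro y
  obtain ⟨x, hx⟩ := LinearMap.range_eq_top.mp hr y
  exact ⟨x, hx⟩

lemma Nproj_symm {m n : ℕ} {A : Matrix (Fin m) (Fin n) ℝ} :
    (Nproj A)ᵀ = Nproj A := by
  have hB : (A * Aᵀ)ᵀ = A * Aᵀ := by simp [transpose_mul]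
  simp [Nproj, pinv, transpose_mul, Matrix.transpose_nonsing_inv, hB, Matrix.mul_assoc]

lemma Nproj_idem {m n : ℕ} {A : Matrix (Fin m) (Fin n) ℝ} (h : A.rank = m) :
    Nproj A * Nproj A = Nproj A := by
  have hB : IsUnit (A * Aᵀ).det := (Matrix.isUnit_iff_isUnit_det _).mp (gram_isUnit h)
  show Aᵀ * (A * Aᵀ)⁻¹ * A * (Aᵀ * (A * Aᵀ)⁻¹ * A) = Aᵀ * (A * Aᵀ)⁻¹ * A
  calc Aᵀ * (A * Aᵀ)⁻¹ * A * (Aᵀ * (A * Aᵀ)⁻¹ * A)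
      = Aᵀ * (A * Aᵀ)⁻¹ * ((A * Aᵀ) * ((A * Aᵀ)⁻¹ * A)) := by
        simp only [Matrix.mul_assoc]
    _ = Aᵀ * (A * Aᵀ)⁻¹ * A := by
        rw [Matrix.mul_nonsing_inv_cancel_left _ _ hB]

lemma Rrefl_symm {m n : ℕ} {A : Matrix (Fin m) (Fin n) ℝ} :
    (Rrefl A)ᵀ = Rrefl A := by
  simp [Rrefl, transpose_smul, Nproj_symm]

lemma Rrefl_mul_self {m n : ℕ} {A : Matrix (Fin m) (Fin n) ℝ} (h : A.rank = m) :
    Rrefl A * Rrefl A = 1 := by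
  have hN := Nproj_idem h
  simp only [Rrefl, sub_mul, mul_sub, one_mul, mul_one, Matrix.smul_mul, Matrix.mul_smul, hN,
    smul_smul]
  module

lemma toEuclideanLin_comp_self {n : ℕ} {R : Matrix (Fin n) (Fin n) ℝ} (hRR : R * R = 1)
    (v : Evec n) : Matrix.toEuclideanLin R (Matrix.toEuclideanLin R v) = v := by
  apply (WithLp.equiv 2 (Fin n → ℝ)).injective
  change WithLp.ofLp (Matrix.toEuclideanLin R (Matrix.toEuclideanLin R v)) = WithLp.ofLp v
  rw [Matrix.ofLp_toEuclideanLin_apply, Matrix.ofLp_toEuclideanLin_apply,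
    Matrix.mulVec_mulVec, hRR, Matrix.one_mulVec]

lemma map_mvE_Rrefl_volume {m n : ℕ} (A : Matrix (Fin m) (Fin n) ℝ) (h : A.rank = m) :
    Measure.map (mvE (Rrefl A)) volume = volume := by
  set R := Rrefl A with hRdef
  have hRR : R * R = 1 := Rrefl_mul_self h
  have hRH : Rᴴ = R := by
    have hRT : Rᵀ = R := Rrefl_symm
    ext i j
    rw [Matrix.conjTranspose_apply, star_trivial]
    conv_rhs => rw [← hRT, Matrix.transpose_apply]
  have hinner : ∀ v w : Evec n,
      (inner ℝ (Matrix.toEuclideanLin R v) (Matrix.toEuclideanLin R w) : ℝ) = inner ℝ v w := by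
    intro v w
    rw [← LinearMap.adjoint_inner_right, ← Matrix.toEuclideanLin_conjTranspose_eq_adjoint, hRH,
      toEuclideanLin_comp_self hRR]
  let e : Evec n ≃ₗ[ℝ] Evec n :=
    LinearEquiv.ofLinear (Matrix.toEuclideanLin R) (Matrix.toEuclideanLin R)
      (LinearMap.ext fun v => toEuclideanLin_comp_self hRR v)
      (LinearMap.ext fun v => toEuclideanLin_comp_self hRR v)
  let iso : Evec n ≃ₗᵢ[ℝ] Evec n := e.isometryOfInner hinner
  have : mvE R = ⇑iso := rfl
  rw [this]
  exact iso.measurePreserving.map_eq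

lemma shear_measurePreserving {n : ℕ} (c : ℝ) :
    MeasurePreserving (fun p : Evec n × Evec n => (p.1 + c • p.2, p.2))
      ((volume : Measure (Evec n)).prod volume) ((volume : Measure (Evec n)).prod volume) := by
  have ht : MeasurePreserving (fun q : Evec n × Evec n => (q.1, q.2 + c • q.1))
      ((volume : Measure (Evec n)).prod volume) ((volume : Measure (Evec n)).prod volume) := by
    refine (MeasurePreserving.id volume).skew_product
      (g := fun a b => b + c • a) ?_ (Filter.Eventually.of_forall fun a => ?_)
    · exact measurable_snd.add (measurable_fst.const_smul c)
    · exact (measurePreserving_add_right volume (c • a)).map_eq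
  have hswap : MeasurePreserving (Prod.swap : Evec n × Evec n → Evec n × Evec n)
      ((volume : Measure (Evec n)).prod volume) ((volume : Measure (Evec n)).prod volume) :=
    Measure.measurePreserving_swap
  have : (fun p : Evec n × Evec n => (p.1 + c • p.2, p.2)) =
      Prod.swap ∘ (fun q : Evec n × Evec n => (q.1, q.2 + c • q.1)) ∘ Prod.swap := rfl
  rw [this]
  exact hswap.comp (ht.comp hswap)

theorem hug_step_measure_preserving
    (m n : ℕ) (hm : 0 < m) (hmn : m < n)
    (f : Evec n → Evec m) (hf : ContDiff ℝ (⊤ : ℕ∞) f)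
    (J : Evec n → Matrix (Fin m) (Fin n) ℝ)
    (hJ : ∀ x, HasFDerivAt f
      (LinearMap.toContinuousLinearMap (Matrix.toEuclideanLin (J x))) x)
    (hrank : ∀ x, (J x).rank = m)
    (δ : ℝ) (hδ : 0 < δ) :
    MeasurePreserving (hugStep J δ) volume volume := by
  -- continuity of J
  have hfd : Continuous (fderiv ℝ f) := hf.continuous_fderiv (by simp)
  have hJeq : ∀ x, fderiv ℝ f x
      = LinearMap.toContinuousLinearMap (Matrix.toEuclideanLin (J x)) :=
    fun x => (hJ x).fderiv
  have hJcont : Continuous J := by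
    apply continuous_matrix
    intro i j
    have heq : ∀ x : Evec n, J x i j =
        fderiv ℝ f x ((WithLp.equiv 2 (Fin n → ℝ)).symm (Pi.single j 1)) i := by
      intro x
      rw [hJeq x]
      show J x i j = (Matrix.toEuclideanLin (J x)
        ((WithLp.equiv 2 (Fin n → ℝ)).symm (Pi.single j 1))) i
      rw [Matrix.toEuclideanLin_apply]
      show J x i j = ((J x) *ᵥ Pi.single j 1) i
      rw [Matrix.mulVec_single]
      simp
    simp only [heq]
    have h1 : Continuous fun x : Evec n =>
        fderiv ℝ f x ((WithLp.equiv 2 (Fin n → ℝ)).symm (Pi.single j 1)) :=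
      (ContinuousLinearMap.apply ℝ (Evec m)
        ((WithLp.equiv 2 (Fin n → ℝ)).symm (Pi.single j 1))).continuous.comp hfd
    exact (EuclideanSpace.proj i).continuous.comp h1
  -- continuity of Rrefl ∘ J
  have hdetne : ∀ x : Evec n, (J x * (J x)ᵀ).det ≠ 0 := by
    intro x
    have := (Matrix.isUnit_iff_isUnit_det _).mp (gram_isUnit (hrank x))
    exact this.ne_zero
  have hgram : Continuous fun x : Evec n => J x * (J x)ᵀ :=
    hJcont.matrix_mul hJcont.matrix_transpose
  have hinv : Continuous fun x : Evec n => (J x * (J x)ᵀ)⁻¹ := by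
    have : (fun x : Evec n => (J x * (J x)ᵀ)⁻¹)
        = fun x => ((J x * (J x)ᵀ).det)⁻¹ • (J x * (J x)ᵀ).adjugate := by
      funext x
      rw [Matrix.inv_def, Ring.inverse_eq_inv']
    rw [this]
    exact (hgram.matrix_det.inv₀ hdetne).smul hgram.matrix_adjugate
  have hRcont : Continuous fun x : Evec n => Rrefl (J x) := by
    unfold Rrefl Nproj pinv
    exact continuous_const.sub (
      ((hJcont.matrix_transpose.matrix_mul hinv).matrix_mul hJcont).const_smul (2 : ℝ))
  -- measurability of the reflection skew product
  have hgm : Measurable fun p : Evec n × Evec n => mvE (Rrefl (J p.1)) p.2 := by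
    apply Continuous.measurable
    have h1 : Continuous fun p : Evec n × Evec n =>
        (Rrefl (J p.1)) *ᵥ (WithLp.equiv 2 (Fin n → ℝ)) p.2 := by
      apply Continuous.matrix_mulVec
      · exact hRcont.comp continuous_fst
      · exact (PiLp.continuous_ofLp 2 fun _ : Fin n => ℝ).comp continuous_snd
    have : (fun p : Evec n × Evec n => mvE (Rrefl (J p.1)) p.2)
        = fun p => (WithLp.equiv 2 (Fin n → ℝ)).symm
            ((Rrefl (J p.1)) *ᵥ (WithLp.equiv 2 (Fin n → ℝ)) p.2) := by
      funext p
      rw [mvE, Matrix.toEuclideanLin_apply]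
      rfl
    rw [this]
    exact (PiLp.continuous_toLp 2 fun _ : Fin n => ℝ).comp h1
  -- the three factors
  rw [Measure.volume_eq_prod]
  have hs := shear_measurePreserving (n := n) (δ / 2)
  have hS2 : MeasurePreserving (fun p : Evec n × Evec n => (p.1, mvE (Rrefl (J p.1)) p.2))
      ((volume : Measure (Evec n)).prod volume) ((volume : Measure (Evec n)).prod volume) :=
    (MeasurePreserving.id volume).skew_product
      (g := fun a b => mvE (Rrefl (J a)) b) hgm
      (Filter.Eventually.of_forall fun x => map_mvE_Rrefl_volume (J x) (hrank x))
  have hcomp : hugStep J δ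
      = (fun p : Evec n × Evec n => (p.1 + (δ / 2) • p.2, p.2))
        ∘ (fun p : Evec n × Evec n => (p.1, mvE (Rrefl (J p.1)) p.2))
        ∘ (fun p : Evec n × Evec n => (p.1 + (δ / 2) • p.2, p.2)) := rfl
  rw [hcomp]
  exact hs.comp (hS2.comp hs)

end
end

section
/- The one-step Hug map Ψ_δ is time-reversible: for all x, v, x′, v′ ∈ ℝⁿ, Ψ_δ(x,v) = (x′,v′) if and only if Ψ_δ(x′,−v′) = (x,−v). -/
open Matrix MeasureTheory

noncomputable section

lemma isUnit_AAT {m n : ℕ} (A : Matrix (Fin m) (Fin n) ℝ) (h : A.rank = m) :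
    IsUnit (A * Aᵀ) := by
  rw [← Matrix.mulVec_surjective_iff_isUnit]
  have hr : (A * Aᵀ).rank = m := by rw [Matrix.rank_self_mul_transpose, h]
  have : LinearMap.range (A * Aᵀ).mulVecLin = ⊤ := by
    apply Submodule.eq_top_of_finrank_eq
    simpa [Matrix.rank] using hr
  exact fun y => LinearMap.range_eq_top.mp this y

lemma Rrefl_sq {m n : ℕ} (A : Matrix (Fin m) (Fin n) ℝ) (h : A.rank = m) :
    Rrefl A * Rrefl A = 1 := by
  have hu := isUnit_AAT A h
  have hN : Nproj A * Nproj A = Nproj A := by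
    unfold Nproj pinv
    have : (A * Aᵀ)⁻¹ * (A * Aᵀ) = 1 := Matrix.nonsing_inv_mul _ (Matrix.isUnit_iff_isUnit_det _ |>.mp hu)
    calc Aᵀ * (A * Aᵀ)⁻¹ * A * (Aᵀ * (A * Aᵀ)⁻¹ * A)
        = Aᵀ * (((A * Aᵀ)⁻¹ * (A * Aᵀ)) * ((A * Aᵀ)⁻¹ * A)) := by
          simp only [Matrix.mul_assoc]
      _ = Aᵀ * (A * Aᵀ)⁻¹ * A := by rw [this, Matrix.one_mul, ← Matrix.mul_assoc]
  unfold Rrefl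
  have h2 : ((2:ℝ) • Nproj A) * ((2:ℝ) • Nproj A) = (4:ℝ) • Nproj A := by
    rw [Matrix.smul_mul, Matrix.mul_smul, hN, smul_smul]; norm_num
  rw [Matrix.sub_mul, Matrix.mul_sub, Matrix.mul_sub, h2, Matrix.one_mul, Matrix.mul_one]
  ext i j
  simp [Matrix.sub_apply, Matrix.smul_apply]
  ring

lemma mvE_neg {m n : ℕ} (A : Matrix (Fin m) (Fin n) ℝ) (v : Evec n) :
    mvE A (-v) = -(mvE A v) := map_neg (Matrix.toEuclideanLin A) v

lemma mvE_mvE {n : ℕ} (A B : Matrix (Fin n) (Fin n) ℝ) (v : Evec n) :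
    mvE A (mvE B v) = mvE (A * B) v := by
  simp [mvE, Matrix.toEuclideanLin_apply, Matrix.mulVec_mulVec]

theorem hug_step_time_reversible
    (m n : ℕ) (hm : 0 < m) (hmn : m < n)
    (f : Evec n → Evec m) (hf : ContDiff ℝ (⊤ : ℕ∞) f)
    (J : Evec n → Matrix (Fin m) (Fin n) ℝ)
    (hJ : ∀ x, HasFDerivAt f
      (LinearMap.toContinuousLinearMap (Matrix.toEuclideanLin (J x))) x)
    (hrank : ∀ x, (J x).rank = m)
    (δ : ℝ) (hδ : 0 < δ) :
    ∀ x v x' v' : Evec n,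
      hugStep J δ (x, v) = (x', v') ↔ hugStep J δ (x', -v') = (x, -v) := by
  have key : ∀ x v x2 v2 : Evec n,
      hugStep J δ (x, v) = (x2, v2) → hugStep J δ (x2, -v2) = (x, -v) := by
    intro x v x2 v2 h
    simp only [hugStep, Prod.mk.injEq] at h ⊢
    obtain ⟨hx2, hv2⟩ := h
    have hmid : x2 + (δ / 2) • (-v2) = x + (δ / 2) • v := by
      rw [← hx2, ← hv2, smul_neg]; module
    rw [hmid]
    have hR2 : mvE (Rrefl (J (x + (δ / 2) • v))) (-v2) = -v := by
      have : mvE (Rrefl (J (x + (δ / 2) • v))) v2 = v := by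
        rw [← hv2, mvE_mvE, Rrefl_sq _ (hrank _)]
        simp [mvE, Matrix.toEuclideanLin_apply]
      rw [mvE_neg, this]
    refine ⟨?_, hR2⟩
    rw [hR2, smul_neg]
    module
  intro x v x2 v2
  constructor
  · intro h; exact key x v x2 v2 h
  · intro h
    have := key x2 (-v2) x (-v) h
    simpa using this
end
end

section
/- Suppose that ‖H(x)‖ ≤ β for all x ∈ ℝⁿ and that H is γ-Lipschitz continuous, i.e. ‖H(x) − H(y)‖ ≤ γ‖x − y‖ for all x, y ∈ ℝⁿ. Then for every K ≥ 1 the Hug iterates satisfy ‖f(x_K) − f(x₀)‖ ≤ (δ²/12)‖v₀‖²(3β + γ(K−1)δ‖v₀‖). -/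
open Matrix MeasureTheory

noncomputable section

set_option linter.unusedSectionVars false
set_option linter.unusedVariables false

lemma isUnit_of_rank_eq {m : ℕ} (B : Matrix (Fin m) (Fin m) ℝ) (h : B.rank = m) : IsUnit B := by
  rw [← Matrix.mulVec_surjective_iff_isUnit]
  have : LinearMap.range B.mulVecLin = ⊤ := by
    apply Submodule.eq_top_of_finrank_eq
    rw [← Matrix.rank, h]
    simp [Module.finrank_pi]
  intro y
  exact LinearMap.range_eq_top.mp this y

lemma mul_pinv_eq_one {m n : ℕ} (A : Matrix (Fin m) (Fin n) ℝ) (h : (A * Aᵀ).rank = m) :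
    A * pinv A = 1 := by
  have hu : IsUnit (A * Aᵀ) := isUnit_of_rank_eq _ h
  rw [pinv, ← Matrix.mul_assoc]
  exact Matrix.mul_nonsing_inv _ ((Matrix.isUnit_iff_isUnit_det _).mp hu)

lemma mul_Rrefl_eq_neg {m n : ℕ} (A : Matrix (Fin m) (Fin n) ℝ) (h : (A * Aᵀ).rank = m) :
    A * Rrefl A = -A := by
  have h1 : A * Nproj A = A := by
    rw [Nproj, ← Matrix.mul_assoc, mul_pinv_eq_one A h, Matrix.one_mul]
  rw [Rrefl, Matrix.mul_sub, Matrix.mul_one, Matrix.mul_smul, h1]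
  ring_nf
  module

lemma toEuclideanLin_mul {l m n : ℕ} (A : Matrix (Fin l) (Fin m) ℝ) (B : Matrix (Fin m) (Fin n) ℝ) :
    Matrix.toEuclideanLin (A * B) = (Matrix.toEuclideanLin A).comp (Matrix.toEuclideanLin B) := by
  simp [Matrix.toEuclideanLin_eq_toLin, Matrix.toLin_mul _ (PiLp.basisFun 2 ℝ (Fin m)) _]

lemma Rrefl_transpose_mul_self {m n : ℕ} (A : Matrix (Fin m) (Fin n) ℝ)
    (h : (A * Aᵀ).rank = m) : (Rrefl A)ᵀ * Rrefl A = 1 := by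
  have hu : IsUnit (A * Aᵀ) := by
    rw [← Matrix.mulVec_surjective_iff_isUnit]
    have : LinearMap.range (A * Aᵀ).mulVecLin = ⊤ := by
      apply Submodule.eq_top_of_finrank_eq
      rw [← Matrix.rank, h]; simp [Module.finrank_pi]
    intro y; exact LinearMap.range_eq_top.mp this y
  have hud : IsUnit (A * Aᵀ).det := (Matrix.isUnit_iff_isUnit_det _).mp hu
  have hsymm : ((A * Aᵀ)⁻¹)ᵀ = (A * Aᵀ)⁻¹ := by
    rw [Matrix.transpose_nonsing_inv, Matrix.transpose_mul, Matrix.transpose_transpose]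
  have hNt : (Nproj A)ᵀ = Nproj A := by
    simp [Nproj, pinv, Matrix.transpose_mul, Matrix.transpose_transpose, hsymm, Matrix.mul_assoc]
  have hApinv : A * pinv A = 1 := by
    rw [pinv, ← Matrix.mul_assoc]
    exact Matrix.mul_nonsing_inv _ hud
  have hN2 : Nproj A * Nproj A = Nproj A := by
    rw [Nproj, Matrix.mul_assoc, ← Matrix.mul_assoc A, hApinv, Matrix.one_mul]
  have hRt : (Rrefl A)ᵀ = Rrefl A := by
    simp [Rrefl, Matrix.transpose_sub, Matrix.transpose_smul, hNt]
  rw [hRt]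
  simp only [Rrefl, two_smul ℝ (Nproj A), sub_mul, mul_sub, add_mul, mul_add, one_mul,
    mul_one, hN2]
  abel

lemma norm_mvE_Rrefl {m n : ℕ} (A : Matrix (Fin m) (Fin n) ℝ)
    (h : (A * Aᵀ).rank = m) (v : Evec n) : ‖mvE (Rrefl A) v‖ = ‖v‖ := by
  have key : (Rrefl A)ᵀ * Rrefl A = 1 := Rrefl_transpose_mul_self A h
  have h1 : ∀ u w : Evec n, inner ℝ (Matrix.toEuclideanLin (Rrefl A) u)
      (Matrix.toEuclideanLin (Rrefl A) w) = (inner ℝ u w : ℝ) := by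
    intro u w
    have := Matrix.toEuclideanLin_conjTranspose_eq_adjoint (𝕜 := ℝ) (Rrefl A)
    calc (inner ℝ (Matrix.toEuclideanLin (Rrefl A) u) (Matrix.toEuclideanLin (Rrefl A) w) : ℝ)
        = inner ℝ u (Matrix.toEuclideanLin (Rrefl A)ᴴ (Matrix.toEuclideanLin (Rrefl A) w)) := by
          rw [this, LinearMap.adjoint_inner_right]
      _ = inner ℝ u (Matrix.toEuclideanLin ((Rrefl A)ᴴ * Rrefl A) w) := by
          simp [Matrix.toEuclideanLin_eq_toLin, Matrix.toLin_mul _ (PiLp.basisFun 2 ℝ (Fin n)) _]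
      _ = inner ℝ u w := by
          rw [show (Rrefl A)ᴴ = (Rrefl A)ᵀ from rfl, key]
          simp [Matrix.toEuclideanLin_eq_toLin]
  have := h1 v v
  rw [mvE, ← Real.sqrt_sq (norm_nonneg _), ← Real.sqrt_sq (norm_nonneg v)]
  congr 1
  rw [← real_inner_self_eq_norm_sq, ← real_inner_self_eq_norm_sq, this]

section Analysis
variable {E F : Type*} [NormedAddCommGroup E] [NormedSpace ℝ E]
  [NormedAddCommGroup F] [NormedSpace ℝ F] [CompleteSpace F]

/-- Lipschitz bound on the derivative from a bound on the second derivative. -/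
lemma fderiv_lipschitz_of_snd_bound (f' : E → E →L[ℝ] F) (f'' : E → E →L[ℝ] E →L[ℝ] F)
    (hd2 : ∀ z, HasFDerivAt f' (f'' z) z) (β : ℝ) (hβ0 : 0 ≤ β)
    (hb : ∀ z u w, ‖f'' z u w‖ ≤ β * ‖u‖ * ‖w‖) (x y : E) :
    ‖f' x - f' y‖ ≤ β * ‖x - y‖ := by
  have hop : ∀ z, ‖f'' z‖ ≤ β := by
    intro z
    refine ContinuousLinearMap.opNorm_le_bound _ hβ0 (fun u => ?_)
    refine ContinuousLinearMap.opNorm_le_bound _ (by positivity) (fun w => ?_)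
    calc ‖f'' z u w‖ ≤ β * ‖u‖ * ‖w‖ := hb z u w
      _ = β * ‖u‖ * ‖w‖ := rfl
  exact (convex_univ).norm_image_sub_le_of_norm_hasFDerivWithin_le
    (fun z _ => (hd2 z).hasFDerivWithinAt) (fun z _ => hop z) (Set.mem_univ y) (Set.mem_univ x)

/-- Second order Taylor bound. -/
lemma taylor1_bound (f : E → F) (f' : E → E →L[ℝ] F)
    (hd : ∀ z, HasFDerivAt f (f' z) z) (β : ℝ) (hβ0 : 0 ≤ β)
    (hL : ∀ x y, ‖f' x - f' y‖ ≤ β * ‖x - y‖) (a u : E) :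
    ‖f (a + u) - f a - f' a u‖ ≤ β / 2 * ‖u‖ ^ 2 := by
  set g : ℝ → F := fun t => f (a + t • u) - f a - t • (f' a u) with hg
  have hline : ∀ t : ℝ, HasDerivAt (fun s : ℝ => a + s • u) u t := by
    intro t
    simpa using ((hasDerivAt_id t).smul_const u).const_add a
  have hg' : ∀ t : ℝ, HasDerivAt g (f' (a + t • u) u - f' a u) t := by
    intro t
    have h2 : HasDerivAt (fun s : ℝ => f (a + s • u)) (f' (a + t • u) u) t := by
      simpa [Function.comp_def] using (hd (a + t • u)).comp_hasDerivAt t (hline t)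
    have h3 : HasDerivAt (fun s : ℝ => f a + s • (f' a u)) (f' a u) t := by
      simpa using ((hasDerivAt_id t).smul_const (f' a u)).const_add (f a)
    simpa [hg, sub_sub, Pi.sub_def] using h2.sub h3
  have hB' : ∀ t : ℝ, HasDerivAt (fun t : ℝ => β / 2 * ‖u‖ ^ 2 * t ^ 2)
      (β / 2 * ‖u‖ ^ 2 * (2 * t)) t := by
    intro t
    exact HasDerivAt.const_mul _ (by simpa using hasDerivAt_pow 2 t)
  have hbound : ∀ t ∈ Set.Ico (0:ℝ) 1,
      ‖f' (a + t • u) u - f' a u‖ ≤ β / 2 * ‖u‖ ^ 2 * (2 * t) := by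
    intro t ht
    have h1 : ‖f' (a + t • u) u - f' a u‖ ≤ ‖f' (a + t • u) - f' a‖ * ‖u‖ := by
      rw [← ContinuousLinearMap.sub_apply]
      exact ContinuousLinearMap.le_opNorm _ u
    have h2 : ‖f' (a + t • u) - f' a‖ ≤ β * (t * ‖u‖) := by
      have := hL (a + t • u) a
      simpa [norm_smul, abs_of_nonneg ht.1, mul_assoc] using this
    calc ‖f' (a + t • u) u - f' a u‖ ≤ β * (t * ‖u‖) * ‖u‖ :=
          h1.trans (mul_le_mul_of_nonneg_right h2 (norm_nonneg u))
      _ = β / 2 * ‖u‖ ^ 2 * (2 * t) := by ring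
  have key := image_norm_le_of_norm_deriv_right_le_deriv_boundary
    (f := g) (f' := fun t => f' (a + t • u) u - f' a u) (a := 0) (b := 1)
    (B := fun t => β / 2 * ‖u‖ ^ 2 * t ^ 2) (B' := fun t => β / 2 * ‖u‖ ^ 2 * (2 * t))
    (fun t _ => ((hg' t).continuousAt).continuousWithinAt)
    (fun t _ => (hg' t).hasDerivWithinAt)
    (by simp [hg]) hB' hbound
  have := key (by norm_num : (1:ℝ) ∈ Set.Icc 0 1)
  simpa [hg] using this

set_option maxHeartbeats 1000000 in
/-- Trapezoid-rule error bound with Lipschitz second derivative. -/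
lemma trapezoid_bound (f : E → F) (f' : E → E →L[ℝ] F) (f'' : E → E →L[ℝ] E →L[ℝ] F)
    (hd : ∀ z, HasFDerivAt f (f' z) z) (hd2 : ∀ z, HasFDerivAt f' (f'' z) z)
    (hc2 : Continuous f'') (γ : ℝ) (hγ0 : 0 ≤ γ)
    (hL : ∀ x y u w, ‖f'' x u w - f'' y u w‖ ≤ γ * ‖x - y‖ * ‖u‖ * ‖w‖) (a u : E) :
    ‖f (a + u) - f a - ((1:ℝ)/2) • f' a u - ((1:ℝ)/2) • f' (a + u) u‖
      ≤ γ / 12 * ‖u‖ ^ 3 := by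
  set ψ : ℝ → F := fun t => f (a + t • u) with hψ
  set ψ1 : ℝ → F := fun t => f' (a + t • u) u with hψ1
  set ψ2 : ℝ → F := fun t => f'' (a + t • u) u u with hψ2
  have hline : ∀ t : ℝ, HasDerivAt (fun s : ℝ => a + s • u) u t := by
    intro t
    simpa using ((hasDerivAt_id t).smul_const u).const_add a
  have hψ' : ∀ t : ℝ, HasDerivAt ψ (ψ1 t) t := by
    intro t
    exact (hd (a + t • u)).comp_hasDerivAt t (hline t)
  have hψ1' : ∀ t : ℝ, HasDerivAt ψ1 (ψ2 t) t := by
    intro t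
    have happ : HasFDerivAt (fun z => f' z u)
        ((ContinuousLinearMap.apply ℝ F u).comp (f'' (a + t • u))) (a + t • u) :=
      (ContinuousLinearMap.apply ℝ F u).hasFDerivAt.comp _ (hd2 (a + t • u))
    exact happ.comp_hasDerivAt t (hline t)
  set Fa : ℝ → F := fun t => ((1:ℝ)/2 - t) • ψ1 t + ψ t with hFa
  have hFa' : ∀ t : ℝ, HasDerivAt Fa (((1:ℝ)/2 - t) • ψ2 t) t := by
    intro t
    have h1 : HasDerivAt (fun s : ℝ => ((1:ℝ)/2 - s)) (-1 : ℝ) t := by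
      simpa using (hasDerivAt_id t).const_sub ((1:ℝ)/2)
    have h2 := (h1.smul (hψ1' t)).add (hψ' t)
    convert h2 using 1
    · rfl
    module
  have hcψ2 : Continuous ψ2 := by
    have hlinec : Continuous fun t : ℝ => a + t • u := by continuity
    exact ((hc2.comp hlinec).clm_apply continuous_const).clm_apply continuous_const
  have hint : IntervalIntegrable (fun t : ℝ => ((1:ℝ)/2 - t) • ψ2 t) MeasureTheory.volume 0 1 :=
    (Continuous.smul (by continuity) hcψ2).intervalIntegrable 0 1
  have hFTC : ∫ t in (0:ℝ)..1, ((1:ℝ)/2 - t) • ψ2 t = Fa 1 - Fa 0 :=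
    intervalIntegral.integral_eq_sub_of_hasDerivAt (fun t _ => hFa' t) hint
  -- the constant part integrates to zero
  have hzero : ∫ t in (0:ℝ)..1, ((1:ℝ)/2 - t) • ψ2 (1/2) = 0 := by
    rw [intervalIntegral.integral_smul_const]
    have : ∫ t in (0:ℝ)..1, ((1:ℝ)/2 - t) = 0 := by
      simp [intervalIntegral.integral_sub intervalIntegrable_const
        (intervalIntegral.intervalIntegrable_id), integral_id]
    rw [this, zero_smul]
  have hsplit : Fa 1 - Fa 0 = ∫ t in (0:ℝ)..1, ((1:ℝ)/2 - t) • (ψ2 t - ψ2 (1/2)) := by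
    rw [← hFTC, ← sub_zero (∫ t in (0:ℝ)..1, ((1:ℝ)/2 - t) • ψ2 t), ← hzero,
      ← intervalIntegral.integral_sub hint]
    · simp [smul_sub]
    · exact ((Continuous.smul (by continuity) continuous_const).intervalIntegrable 0 1)
  -- pointwise bound of the integrand
  have hptw : ∀ t ∈ Set.Ioc (0:ℝ) 1,
      ‖((1:ℝ)/2 - t) • (ψ2 t - ψ2 (1/2))‖ ≤ (γ * ‖u‖ ^ 3) * (t - 1/2) ^ 2 := by
    intro t _
    have h1 : ‖ψ2 t - ψ2 (1/2)‖ ≤ γ * (|t - 1/2| * ‖u‖) * ‖u‖ * ‖u‖ := by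
      have h0 := hL (a + t • u) (a + (1/2 : ℝ) • u) u u
      have harg : a + t • u - (a + (1/2 : ℝ) • u) = (t - 1/2) • u := by module
      rw [harg, norm_smul, Real.norm_eq_abs] at h0
      simpa [hψ2] using h0
    calc ‖((1:ℝ)/2 - t) • (ψ2 t - ψ2 (1/2))‖ = |(1:ℝ)/2 - t| * ‖ψ2 t - ψ2 (1/2)‖ := by
          rw [norm_smul, Real.norm_eq_abs]
      _ ≤ |(1:ℝ)/2 - t| * (γ * (|t - 1/2| * ‖u‖) * ‖u‖ * ‖u‖) := by
          apply mul_le_mul_of_nonneg_left h1 (abs_nonneg _)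
      _ = (γ * ‖u‖ ^ 3) * (|t - 1/2| * |(1:ℝ)/2 - t|) := by ring
      _ = (γ * ‖u‖ ^ 3) * (t - 1/2) ^ 2 := by
          rw [show |(1:ℝ)/2 - t| = |t - 1/2| by rw [abs_sub_comm], ← abs_mul, ← sq,
            abs_of_nonneg (sq_nonneg _)]
  have hgint : IntervalIntegrable (fun t : ℝ => (γ * ‖u‖ ^ 3) * (t - 1/2) ^ 2)
      MeasureTheory.volume 0 1 := (by continuity : Continuous _).intervalIntegrable 0 1
  have hnorm : ‖∫ t in (0:ℝ)..1, ((1:ℝ)/2 - t) • (ψ2 t - ψ2 (1/2))‖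
      ≤ |∫ t in (0:ℝ)..1, (γ * ‖u‖ ^ 3) * (t - 1/2) ^ 2| := by
    apply intervalIntegral.norm_integral_le_abs_of_norm_le _ hgint
    have : Set.uIoc (0:ℝ) 1 = Set.Ioc (0:ℝ) 1 := Set.uIoc_of_le (by norm_num)
    rw [MeasureTheory.ae_restrict_iff' measurableSet_uIoc]
    filter_upwards with t ht
    exact hptw t (this ▸ ht)
  have hval : ∫ t in (0:ℝ)..1, (γ * ‖u‖ ^ 3) * (t - 1/2) ^ 2 = (γ * ‖u‖ ^ 3) / 12 := by
    rw [intervalIntegral.integral_const_mul]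
    have : ∫ t in (0:ℝ)..1, (t - 1/2) ^ 2 = ∫ x in (0 - (1:ℝ)/2)..(1 - (1:ℝ)/2), x ^ 2 := by
      rw [← intervalIntegral.integral_comp_sub_right (fun x => x ^ 2) (1/2)]
    rw [this, integral_pow]
    norm_num
    ring
  have hfinal : Fa 1 - Fa 0 =
      f (a + u) - f a - ((1:ℝ)/2) • f' a u - ((1:ℝ)/2) • f' (a + u) u := by
    simp only [hFa, hψ, hψ1]
    rw [show ((1:ℝ)/2 - 1) = -(1/2) by norm_num]
    simp only [one_smul, zero_smul, neg_smul, sub_zero, zero_add, add_zero]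
    module
  rw [← hfinal, hsplit]
  calc ‖∫ t in (0:ℝ)..1, ((1:ℝ)/2 - t) • (ψ2 t - ψ2 (1/2))‖
      ≤ |∫ t in (0:ℝ)..1, (γ * ‖u‖ ^ 3) * (t - 1/2) ^ 2| := hnorm
    _ = (γ * ‖u‖ ^ 3) / 12 := by rw [hval]; exact abs_of_nonneg (by positivity)
    _ = γ / 12 * ‖u‖ ^ 3 := by ring

end Analysis

set_option maxHeartbeats 2000000 in
theorem hug_level_set_deviation_bound
    (m n : ℕ) (hm : 0 < m) (hmn : m < n)
    (f : Evec n → Evec m) (hf : ContDiff ℝ (⊤ : ℕ∞) f)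
    (J : Evec n → Matrix (Fin m) (Fin n) ℝ)
    (hJ : ∀ x, HasFDerivAt f
      (LinearMap.toContinuousLinearMap (Matrix.toEuclideanLin (J x))) x)
    (hrank : ∀ x, (J x).rank = m)
    (δ : ℝ) (hδ : 0 < δ)
    (x xh v : ℕ → Evec n)
    (hxh : ∀ k, xh k = x k + (δ / 2) • v k)
    (hv : ∀ k, v (k + 1) = mvE (Rrefl (J (xh k))) (v k))
    (hx : ∀ k, x (k + 1) = xh k + (δ / 2) • v (k + 1))
    (β γ : ℝ)
    (hβ : ∀ y : Evec n, ‖iteratedFDeriv ℝ 2 f y‖ ≤ β)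
    (hγ : ∀ y z : Evec n,
      ‖iteratedFDeriv ℝ 2 f y - iteratedFDeriv ℝ 2 f z‖ ≤ γ * ‖y - z‖) :
    ∀ K : ℕ, 1 ≤ K →
      ‖f (x K) - f (x 0)‖ ≤
        δ ^ 2 / 12 * ‖v 0‖ ^ 2 * (3 * β + γ * ((K : ℝ) - 1) * δ * ‖v 0‖) := by
  -- nonnegativity of β and γ
  have hβ0 : 0 ≤ β := le_trans (norm_nonneg _) (hβ 0)
  have hγ0 : 0 ≤ γ := by
    have hn : 0 < n := lt_trans hm hmn
    set z : Evec n := EuclideanSpace.single (⟨0, hn⟩ : Fin n) (1 : ℝ) with hz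
    have hz1 : ‖(0 : Evec n) - z‖ = 1 := by
      rw [zero_sub, norm_neg, hz, EuclideanSpace.norm_single]
      norm_num
    have := le_trans (norm_nonneg _) (hγ 0 z)
    rwa [hz1, mul_one] at this
  -- derivative setup
  set D1 : Evec n → Evec n →L[ℝ] Evec m := fun z => fderiv ℝ f z with hD1def
  set D2 : Evec n → Evec n →L[ℝ] Evec n →L[ℝ] Evec m := fun z => fderiv ℝ D1 z with hD2def
  have hd : ∀ z, HasFDerivAt f (D1 z) z :=
    fun z => (hf.differentiable (by simp) z).hasFDerivAt
  have hcd1 : ContDiff ℝ (⊤ : ℕ∞) D1 := hf.fderiv_right (by simp)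
  have hd2 : ∀ z, HasFDerivAt D1 (D2 z) z :=
    fun z => (hcd1.differentiable (by simp) z).hasFDerivAt
  have hc2 : Continuous D2 := (hcd1.fderiv_right (m := 0) (by simp)).continuous
  have happly : ∀ (z u w : Evec n), D2 z u w = iteratedFDeriv ℝ 2 f z ![u, w] := by
    intro z u w
    rw [iteratedFDeriv_two_apply]
    simp [hD2def, hD1def]
  have hbap : ∀ (z u w : Evec n), ‖D2 z u w‖ ≤ β * ‖u‖ * ‖w‖ := by
    intro z u w
    rw [happly]
    calc ‖iteratedFDeriv ℝ 2 f z ![u, w]‖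
        ≤ ‖iteratedFDeriv ℝ 2 f z‖ * ∏ i, ‖(![u, w]) i‖ :=
          ContinuousMultilinearMap.le_opNorm _ _
      _ = ‖iteratedFDeriv ℝ 2 f z‖ * (‖u‖ * ‖w‖) := by
          rw [Fin.prod_univ_two]; simp
      _ ≤ β * (‖u‖ * ‖w‖) := by
          apply mul_le_mul_of_nonneg_right (hβ z) (by positivity)
      _ = β * ‖u‖ * ‖w‖ := by ring
  have hLap : ∀ (y z u w : Evec n), ‖D2 y u w - D2 z u w‖ ≤ γ * ‖y - z‖ * ‖u‖ * ‖w‖ := by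
    intro y z u w
    rw [happly, happly]
    calc ‖iteratedFDeriv ℝ 2 f y ![u, w] - iteratedFDeriv ℝ 2 f z ![u, w]‖
        = ‖(iteratedFDeriv ℝ 2 f y - iteratedFDeriv ℝ 2 f z) ![u, w]‖ := by
          rw [ContinuousMultilinearMap.sub_apply]
      _ ≤ ‖iteratedFDeriv ℝ 2 f y - iteratedFDeriv ℝ 2 f z‖ * ∏ i, ‖(![u, w]) i‖ :=
          ContinuousMultilinearMap.le_opNorm _ _
      _ = ‖iteratedFDeriv ℝ 2 f y - iteratedFDeriv ℝ 2 f z‖ * (‖u‖ * ‖w‖) := by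
          rw [Fin.prod_univ_two]; simp
      _ ≤ γ * ‖y - z‖ * (‖u‖ * ‖w‖) := by
          apply mul_le_mul_of_nonneg_right (hγ y z) (by positivity)
      _ = γ * ‖y - z‖ * ‖u‖ * ‖w‖ := by ring
  have hD1lip : ∀ p q : Evec n, ‖D1 p - D1 q‖ ≤ β * ‖p - q‖ :=
    fderiv_lipschitz_of_snd_bound D1 D2 hd2 β hβ0 hbap
  have hρb : ∀ a u : Evec n, ‖f (a + u) - f a - D1 a u‖ ≤ β / 2 * ‖u‖ ^ 2 :=
    taylor1_bound f D1 hd β hβ0 hD1lip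
  have htrap : ∀ a u : Evec n,
      ‖f (a + u) - f a - ((1:ℝ)/2) • D1 a u - ((1:ℝ)/2) • D1 (a + u) u‖
        ≤ γ / 12 * ‖u‖ ^ 3 :=
    trapezoid_bound f D1 D2 hd hd2 hc2 γ hγ0 hLap
  -- matrix facts
  have hrk : ∀ y : Evec n, (J y * (J y)ᵀ).rank = m := by
    intro y; rw [Matrix.rank_self_mul_transpose, hrank y]
  have hvnorm : ∀ k, ‖v k‖ = ‖v 0‖ := by
    intro k
    induction k with
    | zero => rfl
    | succ k ih => rw [hv k, norm_mvE_Rrefl _ (hrk (xh k)), ih]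
  have hfd : ∀ z, D1 z = LinearMap.toContinuousLinearMap (Matrix.toEuclideanLin (J z)) :=
    fun z => (hJ z).fderiv
  have hJv : ∀ k, D1 (xh k) (v (k + 1)) = - D1 (xh k) (v k) := by
    intro k
    rw [hfd, hv k]
    show Matrix.toEuclideanLin (J (xh k)) (mvE (Rrefl (J (xh k))) (v k))
      = - Matrix.toEuclideanLin (J (xh k)) (v k)
    rw [mvE]
    have h1 : Matrix.toEuclideanLin (J (xh k)) (Matrix.toEuclideanLin (Rrefl (J (xh k))) (v k))
        = Matrix.toEuclideanLin (J (xh k) * Rrefl (J (xh k))) (v k) := by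
      rw [toEuclideanLin_mul]; rfl
    rw [h1, mul_Rrefl_eq_neg _ (hrk (xh k)), map_neg]
    rfl
  -- geometry of the iteration
  set w : ℕ → Evec n := fun k => (δ / 2) • v k with hw
  have hwnorm : ∀ k, ‖w k‖ = δ / 2 * ‖v 0‖ := by
    intro k
    rw [hw]
    simp only [norm_smul, Real.norm_eq_abs, abs_of_pos (by linarith : (0:ℝ) < δ / 2), hvnorm k]
  have hxk : ∀ k, x k = xh k + (- w k) := by
    intro k; rw [hxh k, hw]; module
  have hxk1 : ∀ k, x (k + 1) = xh k + w (k + 1) := fun k => hx k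
  have hxhk : ∀ k, xh (k + 1) = xh k + (2:ℝ) • w (k + 1) := by
    intro k
    rw [hxh (k + 1), hx k, hw]
    module
  -- the per-step decomposition
  set ρ : Evec n → Evec n → Evec m := fun a u => f (a + u) - f a - D1 a u with hρ
  set A : ℕ → Evec m := fun k => ρ (xh k) (w (k + 1)) with hA
  set B : ℕ → Evec m := fun k => ρ (xh k) (- w k) with hB
  have hstep : ∀ k, f (x (k + 1)) - f (x k) = A k - B k := by
    intro k
    have hDscale : D1 (xh k) (w (k + 1)) = - D1 (xh k) (w k) := by
      simp only [hw]
      rw [(D1 (xh k)).map_smul, (D1 (xh k)).map_smul, hJv k, smul_neg]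
    rw [hA, hB, hρ]
    simp only
    rw [← hxk1 k, ← hxk k, hDscale, (D1 (xh k)).map_neg]
    abel
  -- pair bound
  have hpair : ∀ k, ‖A k - B (k + 1)‖ ≤ γ / 12 * (δ * ‖v 0‖) ^ 3 := by
    intro k
    set u : Evec n := (2:ℝ) • w (k + 1) with hu
    have hun : ‖u‖ = δ * ‖v 0‖ := by
      rw [hu, norm_smul, hwnorm (k + 1), Real.norm_eq_abs]
      rw [abs_of_nonneg (by norm_num : (0:ℝ) ≤ 2)]
      ring
    have hident : A k - B (k + 1) =
        f (xh k + u) - f (xh k) - ((1:ℝ)/2) • D1 (xh k) u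
          - ((1:ℝ)/2) • D1 (xh k + u) u := by
      rw [hA, hB, hρ]
      simp only
      have e1 : xh (k + 1) = xh k + u := by rw [hu, hxhk k]
      have e2 : xh (k + 1) + - w (k + 1) = xh k + w (k + 1) := by
        rw [e1, hu]; module
      have e3 : D1 (xh k) (w (k + 1)) = ((1:ℝ)/2) • D1 (xh k) u := by
        simp only [hu, hw, ContinuousLinearMap.map_smul]; module
      have e4 : D1 (xh (k + 1)) (- w (k + 1)) = - (((1:ℝ)/2) • D1 (xh k + u) u) := by
        simp only [e1, hu, hw, ContinuousLinearMap.map_neg, ContinuousLinearMap.map_smul]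
        module
      rw [e2, e3, e4, e1]
      abel
    rw [hident, ← hun]
    exact htrap (xh k) u
  -- boundary bounds
  have hbdA : ∀ k, ‖A k‖ ≤ β / 2 * (δ / 2 * ‖v 0‖) ^ 2 := by
    intro k
    rw [hA]
    have := hρb (xh k) (w (k + 1))
    rw [hwnorm (k + 1)] at this
    exact this
  have hbdB : ∀ k, ‖B k‖ ≤ β / 2 * (δ / 2 * ‖v 0‖) ^ 2 := by
    intro k
    rw [hB]
    have := hρb (xh k) (- w k)
    rwa [norm_neg, hwnorm k] at this
  -- telescoping
  intro K hK
  obtain ⟨K', rfl⟩ : ∃ K', K = K' + 1 := ⟨K - 1, (Nat.succ_pred_eq_of_pos hK).symm⟩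
  have htel : f (x (K' + 1)) - f (x 0) = ∑ k ∈ Finset.range (K' + 1), (A k - B k) := by
    rw [← Finset.sum_range_sub (fun k => f (x k)) (K' + 1)]
    exact Finset.sum_congr rfl fun k _ => hstep k
  have hsplit : ∑ k ∈ Finset.range (K' + 1), (A k - B k)
      = (A K' - B 0) + ∑ k ∈ Finset.range K', (A k - B (k + 1)) := by
    rw [Finset.sum_sub_distrib, Finset.sum_range_succ, Finset.sum_range_succ']
    conv_rhs => rw [Finset.sum_sub_distrib]
    abel
  have hbound : ‖f (x (K' + 1)) - f (x 0)‖
      ≤ β / 2 * (δ / 2 * ‖v 0‖) ^ 2 + β / 2 * (δ / 2 * ‖v 0‖) ^ 2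
        + K' * (γ / 12 * (δ * ‖v 0‖) ^ 3) := by
    rw [htel, hsplit]
    calc ‖(A K' - B 0) + ∑ k ∈ Finset.range K', (A k - B (k + 1))‖
        ≤ ‖A K' - B 0‖ + ‖∑ k ∈ Finset.range K', (A k - B (k + 1))‖ := norm_add_le _ _
      _ ≤ (‖A K'‖ + ‖B 0‖) + ∑ k ∈ Finset.range K', ‖A k - B (k + 1)‖ := by
          apply add_le_add (norm_sub_le _ _) (norm_sum_le _ _)
      _ ≤ (β / 2 * (δ / 2 * ‖v 0‖) ^ 2 + β / 2 * (δ / 2 * ‖v 0‖) ^ 2)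
          + ∑ k ∈ Finset.range K', (γ / 12 * (δ * ‖v 0‖) ^ 3) := by
          apply add_le_add (add_le_add (hbdA K') (hbdB 0))
          exact Finset.sum_le_sum fun k _ => hpair k
      _ = β / 2 * (δ / 2 * ‖v 0‖) ^ 2 + β / 2 * (δ / 2 * ‖v 0‖) ^ 2
          + K' * (γ / 12 * (δ * ‖v 0‖) ^ 3) := by
          rw [Finset.sum_const, Finset.card_range, nsmul_eq_mul]
  refine hbound.trans (le_of_eq ?_)
  push_cast
  ring
end
end

section
/- Along any solution (x(t), v(t)) of the Hug ODE, the Euclidean norm of the velocity is conserved: ‖v(t)‖ = ‖v(0)‖ for all t in the interval of existence. -/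
open Matrix MeasureTheory

noncomputable section

/-- Golub–Pereyra term `N′_⊥(x)[w] = J(x)⁺ H(x)[w,·] T(x)` (as a matrix),
built from the Jacobian matrix `A = J(x)` and the matrix `Hw = H(x)[w,·]`. -/
def Nperp' {m n : ℕ} (A Hw : Matrix (Fin m) (Fin n) ℝ) : Matrix (Fin n) (Fin n) ℝ :=
  pinv A * Hw * Tproj A

/-- Golub–Pereyra term `N′_∥(x)[w] = (N′_⊥(x)[w])ᵀ`. -/
def Npar' {m n : ℕ} (A Hw : Matrix (Fin m) (Fin n) ℝ) : Matrix (Fin n) (Fin n) ℝ :=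
  (Nperp' A Hw)ᵀ

/-- The right-hand side of the velocity equation of the Hug ODE:
`(N′_∥(x)[(T(x)−N(x))v] − N′_⊥(x)[(T(x)−N(x))v]) v`. -/
def hugVField {m n : ℕ} (J : Evec n → Matrix (Fin m) (Fin n) ℝ)
    (Hm : Evec n → Evec n → Matrix (Fin m) (Fin n) ℝ) (x v : Evec n) : Evec n :=
  mvE (Npar' (J x) (Hm x (mvE (Tproj (J x) - Nproj (J x)) v))
      - Nperp' (J x) (Hm x (mvE (Tproj (J x) - Nproj (J x)) v))) v

lemma inner_mvE {n : ℕ} (M : Matrix (Fin n) (Fin n) ℝ) (x y : Evec n) :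
    inner ℝ (mvE M x) y = (inner ℝ x (mvE Mᵀ y) : ℝ) := by
  have h := Matrix.toEuclideanLin_conjTranspose_eq_adjoint M
  rw [Matrix.conjTranspose_eq_transpose_of_trivial] at h
  simp only [mvE, h, LinearMap.adjoint_inner_right]

lemma inner_hugVField {m n : ℕ} (J : Evec n → Matrix (Fin m) (Fin n) ℝ)
    (Hm : Evec n → Evec n → Matrix (Fin m) (Fin n) ℝ) (x v : Evec n) :
    (inner ℝ v (hugVField J Hm x v) : ℝ) = 0 := by
  set B := Nperp' (J x) (Hm x (mvE (Tproj (J x) - Nproj (J x)) v))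
  have hM : (Bᵀ - B)ᵀ = -(Bᵀ - B) := by
    rw [Matrix.transpose_sub, Matrix.transpose_transpose, neg_sub]
  have h1 : (inner ℝ (mvE (Bᵀ - B) v) v : ℝ) = inner ℝ v (mvE (-(Bᵀ - B)) v) := by
    rw [inner_mvE, hM]
  have hneg : mvE (-(Bᵀ - B)) v = -mvE (Bᵀ - B) v := by
    simp [mvE]
  rw [hneg, inner_neg_right, real_inner_comm] at h1
  have h2 : (inner ℝ v (mvE (Bᵀ - B) v) : ℝ) = 0 := by linarith
  simpa [hugVField, Npar'] using h2

theorem hug_ode_conserves_speed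
    (m n : ℕ) (hm : 0 < m) (hmn : m < n)
    (f : Evec n → Evec m) (hf : ContDiff ℝ (⊤ : ℕ∞) f)
    (J : Evec n → Matrix (Fin m) (Fin n) ℝ)
    (hJ : ∀ x, HasFDerivAt f
      (LinearMap.toContinuousLinearMap (Matrix.toEuclideanLin (J x))) x)
    (hrank : ∀ x, (J x).rank = m)
    (Hm : Evec n → Evec n → Matrix (Fin m) (Fin n) ℝ)
    (hHm : ∀ (x w z : Evec n), mvE (Hm x w) z = iteratedFDeriv ℝ 2 f x ![w, z])
    (I : Set ℝ) (x v : ℝ → Evec n)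
    (hx : ∀ t ∈ I, HasDerivAt x (mvE (Tproj (J (x t))) (v t)) t)
    (hv : ∀ t ∈ I, HasDerivAt v (hugVField J Hm (x t) (v t)) t)
    (hI : Convex ℝ I) (h0 : (0 : ℝ) ∈ I) :
    ∀ t ∈ I, ‖v t‖ = ‖v 0‖ := by
  have key : ∀ t ∈ I, HasDerivWithinAt (fun t => (inner ℝ (v t) (v t) : ℝ)) 0 I t := by
    intro t ht
    have hd : HasDerivAt (fun t => (inner ℝ (v t) (v t) : ℝ))
        (inner ℝ (v t) (hugVField J Hm (x t) (v t)) + inner ℝ (hugVField J Hm (x t) (v t)) (v t)) t :=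
      (hv t ht).inner ℝ (hv t ht)
    have ha : (inner ℝ (v t) (hugVField J Hm (x t) (v t)) : ℝ) = 0 := inner_hugVField _ _ _ _
    have hb : (inner ℝ (hugVField J Hm (x t) (v t)) (v t) : ℝ) = 0 := by
      rw [real_inner_comm]; exact ha
    rw [ha, hb, add_zero] at hd
    exact hd.hasDerivWithinAt
  intro t ht
  have hconst : ‖(fun t => (inner ℝ (v t) (v t) : ℝ)) t - (fun t => (inner ℝ (v t) (v t) : ℝ)) 0‖
      ≤ 0 * ‖t - (0 : ℝ)‖ :=
    hI.norm_image_sub_le_of_norm_hasDerivWithin_le (f' := fun _ => 0) (C := 0) key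
      (fun s _ => by simp) h0 ht
  simp only [zero_mul, norm_le_zero_iff, sub_eq_zero] at hconst
  have hsq : ‖v t‖ ^ 2 = ‖v 0‖ ^ 2 := by
    rw [← real_inner_self_eq_norm_sq, ← real_inner_self_eq_norm_sq]; exact hconst
  have := congrArg Real.sqrt hsq
  rwa [Real.sqrt_sq (norm_nonneg _), Real.sqrt_sq (norm_nonneg _)] at this
end
end
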